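/- Let X be a finite connected simplicial complex and δ a cellular perversity. Let Δ̂ and Δ̂′ be simplices of the first barycentric subdivision X̂ such that Δ̂ is a codimension-1 face of Δ̂′, and suppose Δ̂ ⊆ ^{−δ}Δ and Δ̂′ ⊆ ^{−δ}Δ′ for simplices Δ, Δ′ of X. Then Δ and Δ′ are incident and Δ ≥ Δ′ in the poset Λ(X,δ) (Lemma 3.2.2). -/

import Mathlib

/-- An abstract finite simplicial complex on a finite vertex type `V`. -/
structure SComplex (V : Type) [Fintype V] [DecidableEq V] where
  faces : Finset (Finset V)
  nonempty_of_mem : ∀ s ∈ faces, s.Nonempty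
  down_closed : ∀ s ∈ faces, ∀ t, t ⊆ s → t.Nonempty → t ∈ faces

namespace SComplex

variable {V : Type} [Fintype V] [DecidableEq V]

def dime (Δ : Finset V) : ℕ := Δ.card - 1

/-- Two simplices are incident if one is a face of the other. -/
def Incident (Δ Δ' : Finset V) : Prop := Δ ⊆ Δ' ∨ Δ' ⊆ Δ

def Connected (K : SComplex V) : Prop :=
  ∀ Δ ∈ K.faces, ∀ Δ' ∈ K.faces,
    Relation.ReflTransGen (fun s t => s ∈ K.faces ∧ t ∈ K.faces ∧ (s ∩ t).Nonempty) Δ Δ'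

def IsLadder (K : SComplex V) (w : Finset V → ℤ) (f : ℕ → Finset V) (r : ℕ) : Prop :=
  (∀ i ≤ r, f i ∈ K.faces) ∧
  (∀ i < r, Incident (f i) (f (i + 1)) ∧ w (f i) = w (f (i + 1)) + 1)

/-- `Δ ≥ Δ'` in `Λ(X,δ)`. -/
def lamGE (K : SComplex V) (w : Finset V → ℤ) (Δ Δ' : Finset V) : Prop :=
  ∃ (f : ℕ → Finset V) (r : ℕ), IsLadder K w f r ∧ f 0 = Δ ∧ f r = Δ'

/-- A simplex of the first barycentric subdivision `X̂` of `X`: a nonempty chain of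
simplices of `X` (identified with the span of their barycenters). -/
def IsBarySimplex (K : SComplex V) (c : Finset (Finset V)) : Prop :=
  c.Nonempty ∧ (∀ Δ ∈ c, Δ ∈ K.faces) ∧ (∀ Δ ∈ c, ∀ Δ' ∈ c, Δ ⊆ Δ' ∨ Δ' ⊆ Δ)

/-- `Δ` is the member of the chain `c` with strictly largest `μ`-value; its barycenter
is the `μ`-maximal vertex of the corresponding simplex of `X̂`.  The chain `c` spans a
simplex of `X̂` contained in the `μ`-perverse simplex `^μΔ` exactly when this holds. -/
def IsPervMax (μ : Finset V → ℤ) (c : Finset (Finset V)) (Δ : Finset V) : Prop :=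
  Δ ∈ c ∧ ∀ Δ' ∈ c, Δ' ≠ Δ → μ Δ' < μ Δ

end SComplex

open SComplex

/-- A cellular perversity. -/
structure CellPerversity where
  d : ℕ → ℤ
  zero : d 0 = 0
  step : ∀ k : ℕ, 1 ≤ k →
    ((∀ i < k, d i < d k) ∧ (∃ i < k, d k = d i + 1)) ∨
    ((∀ i < k, d k < d i) ∧ (∃ i < k, d k = d i - 1))

def pd {V : Type} [Fintype V] [DecidableEq V] (P : CellPerversity) (Δ : Finset V) : ℤ :=
  P.d (dime Δ)

/-- Values of a cellular perversity on `{0, …, n}` form an interval of integers. -/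
lemma perv_between (P : CellPerversity) :
    ∀ n i j, i ≤ n → j ≤ n → ∀ v : ℤ, P.d i ≤ v → v ≤ P.d j →
    ∃ k, k ≤ n ∧ P.d k = v := by
  intro n
  induction n with
  | zero =>
    intro i j hi hj v h1 h2
    have hi0 : i = 0 := Nat.le_zero.mp hi
    have hj0 : j = 0 := Nat.le_zero.mp hj
    subst hi0; subst hj0
    exact ⟨0, le_refl _, by have := P.zero; omega⟩
  | succ n IH =>
    intro i j hi hj v h1 h2
    by_cases hin : i ≤ n
    · by_cases hjn : j ≤ n
      · obtain ⟨k, hk, hkv⟩ := IH i j hin hjn v h1 h2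
        exact ⟨k, hk.trans (Nat.le_succ n), hkv⟩
      · have hj' : j = n + 1 := by omega
        subst hj'
        rcases P.step (n + 1) (by omega) with ⟨hall, m, hm, hmv⟩ | ⟨hall, m, hm, hmv⟩
        · by_cases hv : v = P.d (n + 1)
          · exact ⟨n + 1, le_refl _, hv.symm⟩
          · have h2' : v ≤ P.d m := by omega
            obtain ⟨k, hk, hkv⟩ := IH i m hin (by omega) v h1 h2'
            exact ⟨k, by omega, hkv⟩
        · have := hall i (by omega)
          omega
    · have hi' : i = n + 1 := by omega
      subst hi'
      rcases P.step (n + 1) (by omega) with ⟨hall, m, hm, hmv⟩ | ⟨hall, m, hm, hmv⟩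
      · by_cases hjn : j ≤ n
        · have := hall j (by omega); omega
        · have hj' : j = n + 1 := by omega
          subst hj'
          exact ⟨n + 1, le_refl _, by omega⟩
      · by_cases hv : v = P.d (n + 1)
        · exact ⟨n + 1, le_refl _, hv.symm⟩
        · by_cases hjn : j ≤ n
          · have h1' : P.d m ≤ v := by omega
            obtain ⟨k, hk, hkv⟩ := IH m j (by omega) hjn v h1' h2
            exact ⟨k, by omega, hkv⟩
          · have hj' : j = n + 1 := by omega
            subst hj'
            omega

/-- Pick a dimension `≤ M` realizing the value `v`, with prescribed choices at the
endpoint values `P.d a` and `P.d b`. -/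
noncomputable def pickDim (P : CellPerversity) (M a b : ℕ) (v : ℤ) : ℕ :=
  if v = P.d a then a
  else if v = P.d b then b
  else if h : ∃ k, k ≤ M ∧ P.d k = v then h.choose else 0

lemma pickDim_spec (P : CellPerversity) (M a b : ℕ) (ha : a ≤ M) (hb : b ≤ M)
    (v : ℤ) (h1 : P.d b ≤ v) (h2 : v ≤ P.d a) :
    pickDim P M a b v ≤ M ∧ P.d (pickDim P M a b v) = v := by
  unfold pickDim
  split_ifs with hva hvb hex
  · exact ⟨ha, hva.symm⟩
  · exact ⟨hb, hvb.symm⟩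
  · exact ⟨hex.choose_spec.1, hex.choose_spec.2⟩
  · exact absurd (perv_between P M b a hb ha v h1 h2) hex

/-- Main construction: a ladder between two nested simplices (in either direction
of the perversity comparison, as long as the weight strictly drops). -/
lemma ladder_nested {V : Type} [Fintype V] [DecidableEq V]
    (K : SComplex V) (P : CellPerversity) (S T : Finset V)
    (hT : T ∈ K.faces) (hS : S.Nonempty) (hST : S ⊆ T)
    (A B : Finset V) (hA : A = S ∨ A = T) (hB : B = S ∨ B = T)
    (hlt : pd P B < pd P A) :
    lamGE K (fun Δ₀ => pd P Δ₀) A B := by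
  classical
  set L : List V := S.toList ++ (T \ S).toList with hL
  have hTne : T.Nonempty := hS.mono hST
  have hnodup : L.Nodup := by
    refine List.Nodup.append (Finset.nodup_toList S) (Finset.nodup_toList (T \ S)) ?_
    intro x hx hx'
    rw [Finset.mem_toList] at hx hx'
    exact (Finset.mem_sdiff.mp hx').2 hx
  have hlen : L.length = T.card := by
    rw [hL, List.length_append, Finset.length_toList, Finset.length_toList,
      Finset.card_sdiff_of_subset hST]
    have := Finset.card_le_card hST
    omega
  have hLT : L.toFinset = T := by
    rw [hL, List.toFinset_append, Finset.toList_toFinset, Finset.toList_toFinset,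
      Finset.union_sdiff_of_subset hST]
  set M : ℕ := dime T with hM
  have hM1 : M + 1 = T.card := by
    have := hTne.card_pos
    simp only [hM, dime]; omega
  set F : ℕ → Finset V := fun j => (L.take (j + 1)).toFinset with hF
  have hFsubT : ∀ j, F j ⊆ T := by
    intro j x hx
    rw [← hLT]
    simp only [hF, List.mem_toFinset] at hx ⊢
    exact List.take_subset _ _ hx
  have hFcard : ∀ j, j ≤ M → (F j).card = j + 1 := by
    intro j hj
    rw [hF]
    rw [List.toFinset_card_of_nodup (hnodup.sublist (List.take_sublist _ _))]
    rw [List.length_take, hlen]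
    omega
  have hdimeF : ∀ j, j ≤ M → dime (F j) = j := by
    intro j hj
    rw [dime, hFcard j hj]
    omega
  have hFmono : ∀ j j', j ≤ j' → F j ⊆ F j' := by
    intro j j' hjj x hx
    simp only [hF, List.mem_toFinset] at hx ⊢
    exact (List.take_sublist_take_left (by omega : j + 1 ≤ j' + 1)).subset hx
  have hFne : ∀ j, (F j).Nonempty := by
    intro j
    have h0 : (F 0).Nonempty := by
      rw [← Finset.card_pos, hFcard 0 (Nat.zero_le _)]
      omega
    exact h0.mono (hFmono 0 j (Nat.zero_le _))
  have hFfaces : ∀ j, F j ∈ K.faces :=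
    fun j => K.down_closed T hT (F j) (hFsubT j) (hFne j)
  have hFS : F (dime S) = S := by
    have hSc : dime S + 1 = S.card := by
      have := hS.card_pos; simp only [dime]; omega
    rw [hF]
    simp only [hSc, hL]
    rw [List.take_left' (Finset.length_toList S), Finset.toList_toFinset]
  have hFT : F M = T := by
    rw [hF]
    simp only [hM1, ← hlen, List.take_length]
    exact hLT
  have hdSM : dime S ≤ M := by
    simp only [hM, dime]
    have := Finset.card_le_card hST
    omega
  have haM : dime A ≤ M := by
    rcases hA with h | h
    · subst h; exact hdSM
    · subst h; exact le_refl _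
  have hbM : dime B ≤ M := by
    rcases hB with h | h
    · subst h; exact hdSM
    · subst h; exact le_refl _
  have hFA : F (dime A) = A := by
    rcases hA with h | h
    · subst h; exact hFS
    · subst h; exact hFT
  have hFB : F (dime B) = B := by
    rcases hB with h | h
    · subst h; exact hFS
    · subst h; exact hFT
  set a := dime A
  set b := dime B
  set r : ℕ := (pd P A - pd P B).toNat with hr
  have hrz : (r : ℤ) = pd P A - pd P B := Int.toNat_of_nonneg (by omega)
  have hpdA : pd P A = P.d a := rfl
  have hpdB : pd P B = P.d b := rfl
  have hval : ∀ v : ℤ, P.d b ≤ v → v ≤ P.d a → pd P (F (pickDim P M a b v)) = v := by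
    intro v h1 h2
    have hs := pickDim_spec P M a b haM hbM v h1 h2
    show P.d (dime (F (pickDim P M a b v))) = v
    rw [hdimeF _ hs.1]
    exact hs.2
  refine ⟨fun i => F (pickDim P M a b (pd P A - i)), r, ⟨?_, ?_⟩, ?_, ?_⟩
  · intro i _
    exact hFfaces _
  · intro i hir
    have hi1 : (i : ℤ) + 1 ≤ r := by exact_mod_cast hir
    have hs1 := pickDim_spec P M a b haM hbM (pd P A - i)
      (by rw [← hpdB]; omega) (by rw [← hpdA]; omega)
    have hs2 := pickDim_spec P M a b haM hbM (pd P A - (i + 1 : ℕ))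
      (by rw [← hpdB]; push_cast; omega) (by rw [← hpdA]; push_cast; omega)
    constructor
    · rcases le_total (pickDim P M a b (pd P A - i)) (pickDim P M a b (pd P A - (i + 1 : ℕ)))
        with h | h
      · exact Or.inl (hFmono _ _ h)
      · exact Or.inr (hFmono _ _ h)
    · show pd P (F (pickDim P M a b (pd P A - (i : ℕ)))) =
        pd P (F (pickDim P M a b (pd P A - ((i + 1 : ℕ) : ℤ)))) + 1
      rw [hval (pd P A - (i : ℕ)) (by rw [← hpdB]; omega) (by rw [← hpdA]; omega),
        hval (pd P A - ((i + 1 : ℕ) : ℤ)) (by rw [← hpdB]; push_cast; omega)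
          (by rw [← hpdA]; push_cast; omega)]
      push_cast
      ring
  · show F (pickDim P M a b (pd P A - (0 : ℕ))) = A
    have : pd P A - ((0 : ℕ) : ℤ) = P.d a := by rw [hpdA]; push_cast; ring
    rw [this]
    rw [pickDim, if_pos rfl, hFA]
  · show F (pickDim P M a b (pd P A - (r : ℕ))) = B
    have hv : pd P A - (r : ℤ) = P.d b := by rw [← hpdB]; omega
    rw [hv, pickDim, if_neg (by rw [← hpdA, ← hpdB]; omega), if_pos rfl, hFB]

/-- Lemma 3.2.2: let `Δ̂` and `Δ̂'` be simplices of the first barycentric subdivision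
`X̂` such that `Δ̂` is a codimension-1 face of `Δ̂'`, with `Δ̂ ⊆ ^{−δ}Δ` and
`Δ̂' ⊆ ^{−δ}Δ'`.  Then `Δ` and `Δ'` are incident and `Δ ≥ Δ'` in `Λ(X,δ)`. -/
theorem statement6 {V : Type} [Fintype V] [DecidableEq V]
    (K : SComplex V) (hne : K.faces.Nonempty) (hconn : K.Connected)
    (P : CellPerversity)
    (c c' : Finset (Finset V)) (hc : IsBarySimplex K c) (hc' : IsBarySimplex K c')
    (hface : c ⊆ c') (hcodim : c'.card = c.card + 1)
    (Δ Δ' : Finset V)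
    (hmax : IsPervMax (fun Δ₀ => -(pd P Δ₀)) c Δ)
    (hmax' : IsPervMax (fun Δ₀ => -(pd P Δ₀)) c' Δ') :
    Incident Δ Δ' ∧ lamGE K (fun Δ₀ => pd P Δ₀) Δ Δ' := by
  have hΔc' : Δ ∈ c' := hface hmax.1
  have hinc : Incident Δ Δ' := hc'.2.2 Δ hΔc' Δ' hmax'.1
  refine ⟨hinc, ?_⟩
  by_cases heq : Δ = Δ'
  · subst heq
    exact ⟨fun _ => Δ, 0, ⟨fun i _ => hc'.2.1 Δ hΔc', fun i hi => absurd hi (Nat.not_lt_zero i)⟩,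
      rfl, rfl⟩
  · have hlt : pd P Δ' < pd P Δ := by
      have := hmax'.2 Δ hΔc' heq
      simp only at this
      omega
    rcases hinc with hsub | hsub
    · exact ladder_nested K P Δ Δ' (hc'.2.1 Δ' hmax'.1)
        (K.nonempty_of_mem Δ (hc'.2.1 Δ hΔc')) hsub Δ Δ' (Or.inl rfl) (Or.inr rfl) hlt
    · exact ladder_nested K P Δ' Δ (hc'.2.1 Δ hΔc')
        (K.nonempty_of_mem Δ' (hc'.2.1 Δ' hmax'.1)) hsub Δ Δ' (Or.inr rfl) (Or.inl rfl) hlt
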